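/- Let n ≥ 1. In Minkowski space E^{n+1}_1, the dual cone of the closed future cone is the closed past cone, and the dual cone of the closed past cone is the closed future cone: F* = P and P* = F. -/

import Mathlib

open Set Pointwise

/-- The Minkowski bilinear form on `ℝ^(n+1)`:
`⟪x,y⟫ = x₁y₁ + ⋯ + xₙyₙ − x_{n+1}y_{n+1}`. -/
def mink {n : ℕ} (x y : EuclideanSpace ℝ (Fin (n + 1))) : ℝ :=
  (∑ i : Fin n, x i.castSucc * y i.castSucc) - x (Fin.last n) * y (Fin.last n)

/-- The closed future cone in Minkowski space. -/
def futureCone (n : ℕ) : Set (EuclideanSpace ℝ (Fin (n + 1))) :=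
  {v | mink v v ≤ 0 ∧ 0 ≤ v (Fin.last n)}

/-- The closed past cone in Minkowski space: `P = -F`. -/
def pastCone (n : ℕ) : Set (EuclideanSpace ℝ (Fin (n + 1))) :=
  -futureCone n

/-- The dual cone of a set with respect to the Minkowski form. -/
def minkDual {n : ℕ} (K : Set (EuclideanSpace ℝ (Fin (n + 1)))) :
    Set (EuclideanSpace ℝ (Fin (n + 1))) :=
  {xs | ∀ x ∈ K, 0 ≤ mink xs x}

lemma mink_neg_left {n : ℕ} (x y : EuclideanSpace ℝ (Fin (n + 1))) :
    mink (-x) y = - mink x y := by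
  have hc : ∀ i : Fin n, (-x) i.castSucc * y i.castSucc = -(x i.castSucc * y i.castSucc) :=
    fun i => by show -(x i.castSucc) * _ = _; ring
  have hl : (-x) (Fin.last n) = -(x (Fin.last n)) := rfl
  rw [mink, mink, Finset.sum_congr rfl fun i _ => hc i, Finset.sum_neg_distrib, hl]
  ring

lemma mink_neg_right {n : ℕ} (x y : EuclideanSpace ℝ (Fin (n + 1))) :
    mink x (-y) = - mink x y := by
  have hc : ∀ i : Fin n, x i.castSucc * (-y) i.castSucc = -(x i.castSucc * y i.castSucc) :=
    fun i => by show _ * -(y i.castSucc) = _; ring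
  have hl : (-y) (Fin.last n) = -(y (Fin.last n)) := rfl
  rw [mink, mink, Finset.sum_congr rfl fun i _ => hc i, Finset.sum_neg_distrib, hl]
  ring

lemma mink_self {n : ℕ} (x : EuclideanSpace ℝ (Fin (n + 1))) :
    mink x x = (∑ i : Fin n, x i.castSucc ^ 2) - x (Fin.last n) ^ 2 := by
  rw [mink, Finset.sum_congr rfl fun i _ => (pow_two (x i.castSucc)).symm,
    ← pow_two]

/-- For `x, y` in the future cone, `⟪x,y⟫ ≤ 0`. -/
lemma mink_nonpos_of_mem {n : ℕ} {x y : EuclideanSpace ℝ (Fin (n + 1))}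
    (hx : x ∈ futureCone n) (hy : y ∈ futureCone n) : mink x y ≤ 0 := by
  obtain ⟨hx1, hx2⟩ := hx
  obtain ⟨hy1, hy2⟩ := hy
  set A : ℝ := ∑ i : Fin n, x i.castSucc * y i.castSucc with hA
  set S : ℝ := ∑ i : Fin n, x i.castSucc ^ 2 with hS
  set T : ℝ := ∑ i : Fin n, y i.castSucc ^ 2 with hT
  have hCS : A ^ 2 ≤ S * T := Finset.sum_mul_sq_le_sq_mul_sq _ _ _
  have hSx : S ≤ x (Fin.last n) ^ 2 := by
    have := mink_self x; rw [this] at hx1; linarith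
  have hTy : T ≤ y (Fin.last n) ^ 2 := by
    have := mink_self y; rw [this] at hy1; linarith
  have hSnn : 0 ≤ S := Finset.sum_nonneg fun i _ => sq_nonneg _
  have hTnn : 0 ≤ T := Finset.sum_nonneg fun i _ => sq_nonneg _
  have hgoal : mink x y = A - x (Fin.last n) * y (Fin.last n) := rfl
  rw [hgoal]
  nlinarith [sq_nonneg (A - x (Fin.last n) * y (Fin.last n)),
    sq_nonneg (A + x (Fin.last n) * y (Fin.last n)),
    mul_nonneg hx2 hy2, mul_le_mul hSx hTy hTnn (sq_nonneg _)]

lemma minkDual_future {n : ℕ} : minkDual (futureCone n) = pastCone n := by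
  ext xs
  constructor
  · intro h
    set S : ℝ := ∑ i : Fin n, xs i.castSucc ^ 2 with hS
    set L : ℝ := Real.sqrt S with hL
    have hSnn : 0 ≤ S := Finset.sum_nonneg fun i _ => sq_nonneg _
    have hLnn : 0 ≤ L := Real.sqrt_nonneg _
    have hL2 : L ^ 2 = S := Real.sq_sqrt hSnn
    -- test vector: spatial part -xs, last coordinate L
    set x : EuclideanSpace ℝ (Fin (n + 1)) :=
      WithLp.toLp 2 (fun i => if i = Fin.last n then L else - xs i) with hx
    have hxcast : ∀ i : Fin n, x i.castSucc = - xs i.castSucc := by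
      intro i
      simp [hx, Fin.castSucc_lt_last i |>.ne]
    have hxlast : x (Fin.last n) = L := by simp [hx]
    have hsumx : ∑ i : Fin n, x i.castSucc ^ 2 = S := by
      rw [hS]
      exact Finset.sum_congr rfl fun i _ => by rw [hxcast i]; ring
    have hxF : x ∈ futureCone n := by
      refine ⟨?_, by rw [hxlast]; exact hLnn⟩
      rw [mink_self, hsumx, hxlast, hL2]
      simp
    -- test vector e_last
    set e : EuclideanSpace ℝ (Fin (n + 1)) :=
      WithLp.toLp 2 (fun i => if i = Fin.last n then (1:ℝ) else 0) with he
    have hecast : ∀ i : Fin n, e i.castSucc = 0 := by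
      intro i
      simp [he, Fin.castSucc_lt_last i |>.ne]
    have helast : e (Fin.last n) = 1 := by simp [he]
    have heF : e ∈ futureCone n := by
      refine ⟨?_, by rw [helast]; norm_num⟩
      rw [mink_self, helast]
      have : ∑ i : Fin n, e i.castSucc ^ 2 = 0 :=
        Finset.sum_eq_zero fun i _ => by rw [hecast i]; ring
      rw [this]; norm_num
    have h1 := h e heF
    have h1' : xs (Fin.last n) ≤ 0 := by
      have hme : mink xs e = - xs (Fin.last n) := by
        rw [mink, helast]
        have : ∑ i : Fin n, xs i.castSucc * e i.castSucc = 0 :=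
          Finset.sum_eq_zero fun i _ => by rw [hecast i]; ring
        rw [this]; ring
      rw [hme] at h1; linarith
    have h2 := h x hxF
    have h2' : 0 ≤ -S - xs (Fin.last n) * L := by
      have hmx : mink xs x = -S - xs (Fin.last n) * L := by
        rw [mink, hxlast]
        have : ∑ i : Fin n, xs i.castSucc * x i.castSucc = -S := by
          rw [hS, ← Finset.sum_neg_distrib]
          exact Finset.sum_congr rfl fun i _ => by rw [hxcast i]; ring
        rw [this]
      rw [hmx] at h2; linarith
    -- conclude -xs ∈ futureCone
    rw [pastCone, Set.mem_neg]
    constructor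
    · have hm : mink (-xs) (-xs) = mink xs xs := by
        rw [mink_neg_left, mink_neg_right]; ring
      rw [hm, mink_self, ← hS]
      nlinarith [sq_nonneg (L + xs (Fin.last n))]
    · show (0:ℝ) ≤ -(xs (Fin.last n))
      linarith
  · intro hxs x hx
    rw [pastCone, Set.mem_neg] at hxs
    have := mink_nonpos_of_mem hxs hx
    rw [mink_neg_left] at this
    linarith

theorem stmt_5 (n : ℕ) (hn : 1 ≤ n) :
    minkDual (futureCone n) = pastCone n ∧ minkDual (pastCone n) = futureCone n := by
  refine ⟨minkDual_future, ?_⟩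
  ext xs
  constructor
  · intro h
    have : -xs ∈ minkDual (futureCone n) := by
      intro x hx
      have := h (-x) (by rw [pastCone, Set.mem_neg, neg_neg]; exact hx)
      rw [mink_neg_right] at this
      rw [mink_neg_left]
      linarith
    rw [minkDual_future, pastCone, Set.mem_neg, neg_neg] at this
    exact this
  · intro hxs y hy
    rw [pastCone, Set.mem_neg] at hy
    have := mink_nonpos_of_mem hxs hy
    rw [← neg_neg y, mink_neg_right]
    linarith
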